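/- Let K be a compact topological group and S₀, S₁ ⊆ K nonempty closed subsets with S₀ ⊆ S₁ and S₁ ⊆ k⁻¹ · S₀ for some k ∈ K. Then S₀ = S₁. -/

import Mathlib

open Pointwise

/-- Sandwich argument in a compact topological group: if `S₀ ⊆ S₁ ⊆ k⁻¹ • S₀`
for nonempty closed subsets `S₀, S₁`, then `S₀ = S₁`. -/
theorem stmt_1 {K : Type*} [Group K] [TopologicalSpace K] [IsTopologicalGroup K]
    [CompactSpace K] [T2Space K] (S₀ S₁ : Set K)
    (h₀c : IsClosed S₀) (h₁c : IsClosed S₁)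
    (h₀ne : S₀.Nonempty) (h₁ne : S₁.Nonempty)
    (k : K) (h01 : S₀ ⊆ S₁) (h1k : S₁ ⊆ k⁻¹ • S₀) : S₀ = S₁ := by
  have hk1 : ∀ x ∈ S₁, k * x ∈ S₀ := by
    intro x hx
    have := h1k hx
    rwa [Set.mem_inv_smul_set_iff, smul_eq_mul] at this
  have hpow : ∀ n : ℕ, ∀ x ∈ S₁, k ^ (n + 1) * x ∈ S₀ := by
    intro n
    induction n with
    | zero => intro x hx; simpa using hk1 x hx
    | succ n ih =>
      intro x hx
      have h1 : k ^ (n + 1) * x ∈ S₁ := h01 (ih x hx)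
      have := hk1 _ h1
      rwa [← mul_assoc, ← pow_succ'] at this
  refine le_antisymm h01 ?_
  intro x hx
  have hcp : MapClusterPt x Filter.atTop (fun n : ℕ => k ^ n * x) := by
    have h1 : MapClusterPt (1 : K) Filter.atTop (k ^ · : ℕ → K) :=
      mapClusterPt_one_atTop_pow k
    have hc : ContinuousAt (fun y : K => y * x) 1 := by fun_prop
    simpa [Function.comp_def] using h1.continuousAt_comp hc
  have hmem : ∀ᶠ n : ℕ in Filter.atTop, k ^ n * x ∈ S₀ := by
    filter_upwards [Filter.eventually_ge_atTop 1] with n hn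
    obtain ⟨m, rfl⟩ := Nat.exists_eq_add_of_le hn
    have := hpow m x hx
    simpa [add_comm] using this
  have : ClusterPt x (Filter.map (fun n : ℕ => k ^ n * x) Filter.atTop) := hcp
  have hx0 : x ∈ closure S₀ := by
    rw [mem_closure_iff_clusterPt]
    exact this.mono (Filter.le_principal_iff.2 (Filter.eventually_map.2 hmem))
  rwa [h₀c.closure_eq] at hx0
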